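/- Under the stated assumptions, for every m ∈ ℤ the rational numbers q(m)/p(m) satisfy 0 < q(m+1)/p(m+1) < q(m)/p(m) < 1; in particular the sequence m ↦ q(m)/p(m) is strictly decreasing and takes values in the open interval (0, 1). -/

import Mathlib

/-- `pSeq a b k l p` says that `p : ℤ → ℤ` is the (unique) sequence with `p 0 = l`,
`p 1 = k`, and `p (m+2) = b * p (m+1) - p m` for even `m`,
`p (m+2) = a * p (m+1) - p m` for odd `m`. -/
def pSeq (a b k l : ℤ) (p : ℤ → ℤ) : Prop :=
  p 0 = l ∧ p 1 = k ∧
    ∀ m : ℤ, p (m + 2) = (if Even m then b else a) * p (m + 1) - p m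

lemma rec_pos (a b : ℤ) (ha : 2 ≤ a) (hb : 2 ≤ b) (r : ℤ → ℤ)
    (hrec : ∀ m : ℤ, r (m + 2) = (if Even m then b else a) * r (m + 1) - r m)
    (h0 : 0 < r 0) (h01 : r 0 ≤ r 1) (h0m : r 0 ≤ r (-1)) :
    ∀ m : ℤ, 0 < r m := by
  have ht : ∀ m : ℤ, 2 ≤ (if Even m then b else a) := fun m => by split <;> assumption
  have fwd : ∀ n : ℕ, 0 < r n ∧ r n ≤ r ((n : ℤ) + 1) := by
    intro n
    induction n with
    | zero => exact ⟨h0, by simpa using h01⟩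
    | succ n ih =>
      obtain ⟨h1, h2⟩ := ih
      have h3 : 0 < r ((n : ℤ) + 1) := lt_of_lt_of_le h1 h2
      have hr := hrec n
      have htn := ht n
      have h4 : r ((n : ℤ) + 1) ≤ r ((n : ℤ) + 2) := by nlinarith
      have e2 : ((n + 1 : ℕ) : ℤ) + 1 = (n : ℤ) + 2 := by push_cast; ring
      have e1 : ((n + 1 : ℕ) : ℤ) = (n : ℤ) + 1 := by push_cast; ring
      rw [e2, e1]
      exact ⟨h3, h4⟩
  have bwd : ∀ n : ℕ, 0 < r (-(n : ℤ)) ∧ r (-(n : ℤ)) ≤ r (-(n : ℤ) - 1) := by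
    intro n
    induction n with
    | zero => exact ⟨by simpa using h0, by simpa using h0m⟩
    | succ n ih =>
      obtain ⟨h1, h2⟩ := ih
      have h3 : 0 < r (-(n : ℤ) - 1) := lt_of_lt_of_le h1 h2
      have hr := hrec (-(n : ℤ) - 2)
      rw [show (-(n : ℤ) - 2 + 2) = -(n : ℤ) by ring,
        show (-(n : ℤ) - 2 + 1) = -(n : ℤ) - 1 by ring] at hr
      have htn := ht (-(n : ℤ) - 2)
      have h4 : r (-(n : ℤ) - 1) ≤ r (-(n : ℤ) - 2) := by nlinarith
      have e2 : -((n + 1 : ℕ) : ℤ) - 1 = -(n : ℤ) - 2 := by push_cast; ring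
      have e1 : -((n + 1 : ℕ) : ℤ) = -(n : ℤ) - 1 := by push_cast; ring
      rw [e2, e1]
      exact ⟨h3, h4⟩
  intro m
  rcases le_or_gt 0 m with h | h
  · obtain ⟨n, rfl⟩ := Int.eq_ofNat_of_zero_le h
    exact (fwd n).1
  · obtain ⟨n, hn⟩ := Int.eq_ofNat_of_zero_le (by omega : (0 : ℤ) ≤ -m)
    have : m = -(n : ℤ) := by omega
    rw [this]
    exact (bwd n).1

lemma rec_const (a b : ℤ) (p q : ℤ → ℤ)
    (hp : ∀ m : ℤ, p (m + 2) = (if Even m then b else a) * p (m + 1) - p m)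
    (hq : ∀ m : ℤ, q (m + 2) = (if Even m then b else a) * q (m + 1) - q m) :
    ∀ m : ℤ, q (m + 1) * p m - q m * p (m + 1) = q 1 * p 0 - q 0 * p 1 := by
  have step : ∀ m : ℤ, q (m + 2) * p (m + 1) - q (m + 1) * p (m + 2)
      = q (m + 1) * p m - q m * p (m + 1) := by
    intro m; rw [hp m, hq m]; ring
  intro m
  induction m using Int.induction_on with
  | zero => simp
  | succ n ih =>
    have h := step n
    rw [show ((n : ℤ) + 1 + 1) = (n : ℤ) + 2 by ring]
    rw [h]; exact ih
  | pred n ih =>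
    have h := step (-(n : ℤ) - 1)
    rw [show (-(n : ℤ) - 1 + 2) = -(n : ℤ) + 1 by ring,
      show (-(n : ℤ) - 1 + 1) = -(n : ℤ) by ring] at h
    rw [show (-(n : ℤ) - 1 + 1) = -(n : ℤ) by ring]
    rw [← h]; exact ih

theorem q_div_p_strictAnti (a b k l : ℤ) (ha : 2 ≤ a) (hb : 2 ≤ b) (hab : 4 < a * b)
    (hl : 1 < l) (hlk : l < k) (hka : k < (a - 1) * l) (hcop : IsCoprime k l)
    (c : ℤ) (hc1 : 1 ≤ c) (hck : c ≤ k - 1)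
    (hcl : (c : ℚ) / k < 1 / l) (hcr : (1 : ℚ) / l < (c + 1) / k)
    (p : ℤ → ℤ) (hp : pSeq a b k l p)
    (q : ℤ → ℤ) (hq : pSeq a b c 1 q) :
    (∀ m : ℤ, 0 < (q (m + 1) : ℚ) / (p (m + 1)) ∧
        (q (m + 1) : ℚ) / (p (m + 1)) < (q m : ℚ) / (p m) ∧
        (q m : ℚ) / (p m) < 1) ∧
      StrictAnti (fun m : ℤ => (q m : ℚ) / (p m)) := by
  obtain ⟨hp0, hp1, hprec⟩ := hp
  obtain ⟨hq0, hq1, hqrec⟩ := hq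
  have hkQ : (0 : ℚ) < (k : ℚ) := by exact_mod_cast (by omega : (0:ℤ) < k)
  have hlQ : (0 : ℚ) < (l : ℚ) := by exact_mod_cast (by omega : (0:ℤ) < l)
  rw [div_lt_div_iff₀ hkQ hlQ] at hcl
  rw [div_lt_div_iff₀ hlQ hkQ] at hcr
  have hclZ : c * l < k := by exact_mod_cast (by linarith : (c : ℚ) * l < k)
  have hcrZ : k < (c + 1) * l := by exact_mod_cast (by linarith : (k : ℚ) < (c + 1) * l)
  -- c ≤ a - 2
  have hca : c ≤ a - 2 := by
    have h1 : c * l < (a - 1) * l := lt_trans hclZ hka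
    have h2 : c < a - 1 := lt_of_mul_lt_mul_right h1 (by omega)
    omega
  -- p(-1) and q(-1)
  have hpm1 : p (-1) = a * l - k := by
    have h := hprec (-1)
    rw [show (-1 : ℤ) + 2 = 1 by ring, show (-1 : ℤ) + 1 = 0 by ring] at h
    have : ¬ Even (-1 : ℤ) := by decide
    rw [if_neg this, hp0, hp1] at h
    omega
  have hqm1 : q (-1) = a - c := by
    have h := hqrec (-1)
    rw [show (-1 : ℤ) + 2 = 1 by ring, show (-1 : ℤ) + 1 = 0 by ring] at h
    have : ¬ Even (-1 : ℤ) := by decide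
    rw [if_neg this, hq0, hq1] at h
    omega
  -- positivity of p
  have ppos : ∀ m : ℤ, 0 < p m := by
    apply rec_pos a b ha hb p hprec
    · omega
    · omega
    · rw [hp0, hpm1]; nlinarith
  have qpos : ∀ m : ℤ, 0 < q m := by
    apply rec_pos a b ha hb q hqrec
    · omega
    · omega
    · rw [hq0, hqm1]; omega
  have dpos : ∀ m : ℤ, 0 < p m - q m := by
    have hdrec : ∀ m : ℤ, (fun m => p m - q m) (m + 2)
        = (if Even m then b else a) * (fun m => p m - q m) (m + 1) - (fun m => p m - q m) m := by
      intro m; simp only; rw [hprec m, hqrec m]; ring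
    have := rec_pos a b ha hb (fun m => p m - q m) hdrec
      (by rw [hp0, hq0]; omega)
      (by rw [hp0, hq0, hp1, hq1];
          nlinarith [mul_nonneg (by omega : (0:ℤ) ≤ c - 1) (by omega : (0:ℤ) ≤ l - 1)])
      (by rw [hp0, hq0, hpm1, hqm1];
          nlinarith [mul_nonneg (by omega : (0:ℤ) ≤ a - 2 - c) (by omega : (0:ℤ) ≤ l - 1)])
    simpa using this
  have Econst := rec_const a b p q hprec hqrec
  have main : ∀ m : ℤ, 0 < (q (m + 1) : ℚ) / (p (m + 1)) ∧
      (q (m + 1) : ℚ) / (p (m + 1)) < (q m : ℚ) / (p m) ∧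
      (q m : ℚ) / (p m) < 1 := by
    intro m
    have Pm := ppos m
    have Pm1 := ppos (m + 1)
    have Qm := qpos m
    have Qm1 := qpos (m + 1)
    have Dm := dpos m
    have PmQ : (0 : ℚ) < (p m : ℚ) := by exact_mod_cast Pm
    have Pm1Q : (0 : ℚ) < (p (m + 1) : ℚ) := by exact_mod_cast Pm1
    refine ⟨div_pos (by exact_mod_cast Qm1) Pm1Q, ?_, ?_⟩
    · rw [div_lt_div_iff₀ Pm1Q PmQ]
      have hE := Econst m
      rw [hq0, hq1, hp0, hp1] at hE
      have : q (m + 1) * p m < q m * p (m + 1) := by nlinarith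
      exact_mod_cast this
    · rw [div_lt_one PmQ]
      exact_mod_cast (by omega : q m < p m)
  exact ⟨main, strictAnti_int_of_succ_lt fun n => (main n).2.1⟩
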